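/- Let γ₀ < γ₁ be real numbers and let w : [γ₀, γ₁] → ℝ be positive and continuous. Set κ := (1/2)∫_{γ₀}^{γ₁} w(γ) dγ. Then there exists a unique continuously differentiable, strictly increasing function γ* : [0,1] → [γ₀, γ₁] with γ*(0) = γ₀ and γ*(1) = γ₁ such that (1/2)·(γ*)'(t)·w(γ*(t)) = κ for all t ∈ [0,1]; consequently the per-timestep loss ℓ(t) := (1/2)·(γ*)'(t)·w(γ*(t)) is constant equal to κ ≥ 0 and has zero variance over t ∼ Uniform[0,1]. (Proposition: Constant Per-Timestep Diffusion Loss.) -/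

import Mathlib

open Set MeasureTheory intervalIntegral

/-- **Constant Per-Timestep Diffusion Loss.**
Let `γ₀ < γ₁` and let `w` be positive and continuous on `[γ₀, γ₁]`.
Set `κ := (1/2) ∫_{γ₀}^{γ₁} w`.  Then there exists a unique continuously
differentiable, strictly increasing schedule `γ* : [0,1] → [γ₀,γ₁]` with
`γ*(0) = γ₀`, `γ*(1) = γ₁` and `(1/2) (γ*)'(t) w(γ*(t)) = κ` for all `t ∈ [0,1]`;
consequently the per-timestep loss `ℓ(t) = (1/2) (γ*)'(t) w(γ*(t))` is constantly
equal to `κ ≥ 0` and has zero variance over `t ∼ Uniform[0,1]`. -/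
theorem constant_per_timestep_diffusion_loss
    (γ₀ γ₁ : ℝ) (hγ : γ₀ < γ₁) (w : ℝ → ℝ)
    (hw_pos : ∀ x ∈ Icc γ₀ γ₁, 0 < w x)
    (hw_cont : ContinuousOn w (Icc γ₀ γ₁))
    (κ : ℝ) (hκ : κ = (1 / 2) * ∫ x in γ₀..γ₁, w x)
    (IsSched : (ℝ → ℝ) → Prop)
    (hIsSched : ∀ g, IsSched g ↔
      ContDiffOn ℝ 1 g (Icc (0:ℝ) 1) ∧
      StrictMonoOn g (Icc (0:ℝ) 1) ∧
      MapsTo g (Icc (0:ℝ) 1) (Icc γ₀ γ₁) ∧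
      g 0 = γ₀ ∧ g 1 = γ₁ ∧
      ∀ t ∈ Icc (0:ℝ) 1,
        (1 / 2) * derivWithin g (Icc (0:ℝ) 1) t * w (g t) = κ) :
    (∃ γstar : ℝ → ℝ, IsSched γstar ∧
      -- the per-timestep loss is constant equal to κ ≥ 0 ...
      (∀ t ∈ Icc (0:ℝ) 1,
        (1 / 2) * derivWithin γstar (Icc (0:ℝ) 1) t * w (γstar t) = κ) ∧
      0 ≤ κ ∧
      -- ... and has zero variance over t ∼ Uniform[0,1]
      (∫ t in (0:ℝ)..1,
        ((1 / 2) * derivWithin γstar (Icc (0:ℝ) 1) t * w (γstar t) - κ) ^ 2) = 0) ∧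
    -- uniqueness: any two such schedules agree on [0,1]
    ∀ g₁ g₂ : ℝ → ℝ, IsSched g₁ → IsSched g₂ → EqOn g₁ g₂ (Icc (0:ℝ) 1) := by
    classical
  -- the clamp map and the extended weight
  set c : ℝ → ℝ := fun x => max γ₀ (min γ₁ x) with hcdef
  have hc_mem : ∀ x, c x ∈ Icc γ₀ γ₁ := fun x =>
    ⟨le_max_left _ _, max_le hγ.le (min_le_left _ _)⟩
  have hc_eq : ∀ x ∈ Icc γ₀ γ₁, c x = x := fun x hx => by
    simp [hcdef, min_eq_right hx.2, max_eq_right hx.1]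
  set wt : ℝ → ℝ := fun x => w (c x) with hwtdef
  have hwt_cont : Continuous wt :=
    hw_cont.comp_continuous (continuous_const.max (continuous_const.min continuous_id)) hc_mem
  have hwt_pos : ∀ x, 0 < wt x := fun x => hw_pos _ (hc_mem x)
  have hwt_eq : ∀ x ∈ Icc γ₀ γ₁, wt x = w x := fun x hx => by
    simp [hwtdef, hc_eq x hx]
  -- the cumulative weight W
  set W : ℝ → ℝ := fun x => ∫ s in γ₀..x, wt s with hWdef
  have hW : ∀ x, HasDerivAt W (wt x) x := fun x =>
    intervalIntegral.integral_hasDerivAt_right (hwt_cont.intervalIntegrable (μ := volume) γ₀ x)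
      (hwt_cont.stronglyMeasurableAtFilter volume (nhds x)) hwt_cont.continuousAt
  have hWcont : Continuous W := continuous_iff_continuousAt.2 fun x => (hW x).continuousAt
  have hWmono : StrictMono W := by
    intro x y hxy
    have h1 : 0 < ∫ s in x..y, wt s :=
      intervalIntegral_pos_of_pos (hwt_cont.intervalIntegrable x y) hwt_pos hxy
    have h2 := intervalIntegral.integral_add_adjacent_intervals
      (hwt_cont.intervalIntegrable (μ := volume) γ₀ x) (hwt_cont.intervalIntegrable x y)
    simp only [hWdef]
    linarith [h2]
  -- κ is positive
  have hκpos : 0 < κ := by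
    rw [hκ]
    have : 0 < ∫ x in γ₀..γ₁, w x := by
      apply intervalIntegral_pos_of_pos_on
      · exact (hw_cont.mono (by rw [uIcc_of_le hγ.le])).intervalIntegrable
      · exact fun x hx => hw_pos x ⟨hx.1.le, hx.2.le⟩
      · exact hγ
    linarith
  -- endpoint values of W
  have hW0 : W γ₀ = 0 := by simp [hWdef]
  have hW1 : W γ₁ = 2 * κ := by
    have : ∫ s in γ₀..γ₁, wt s = ∫ s in γ₀..γ₁, w s := by
      apply intervalIntegral.integral_congr
      intro x hx
      rw [uIcc_of_le hγ.le] at hx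
      exact hwt_eq x hx
    rw [hWdef]
    simp only
    rw [this, hκ]; ring
  -- W tends to ±∞
  have hWtop : Filter.Tendsto W Filter.atTop Filter.atTop := by
    have heq : ∀ x ∈ Ici γ₁, W x = W γ₁ + w γ₁ * (x - γ₁) := by
      intro x hx
      have hadd := intervalIntegral.integral_add_adjacent_intervals
        (hwt_cont.intervalIntegrable (μ := volume) γ₀ γ₁) (hwt_cont.intervalIntegrable γ₁ x)
      have hcst : ∫ s in γ₁..x, wt s = w γ₁ * (x - γ₁) := by
        have : ∫ s in γ₁..x, wt s = ∫ s in γ₁..x, w γ₁ := by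
          apply intervalIntegral.integral_congr
          intro s hs
          rw [uIcc_of_le hx] at hs
          have : c s = γ₁ := by
            simp [hcdef, min_eq_left hs.1, max_eq_right hγ.le]
          simp [hwtdef, this]
        rw [this, intervalIntegral.integral_const, smul_eq_mul]; ring
      simp only [hWdef] at hadd ⊢
      linarith
    have hlin : Filter.Tendsto (fun x => W γ₁ + w γ₁ * (x - γ₁)) Filter.atTop Filter.atTop := by
      apply Filter.tendsto_atTop_add_const_left
      exact (Filter.tendsto_atTop_add_const_right _ _ Filter.tendsto_id).const_mul_atTop
        (hw_pos γ₁ ⟨hγ.le, le_rfl⟩)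
    exact hlin.congr' (by
      filter_upwards [Filter.eventually_ge_atTop γ₁] with x hx
      exact (heq x hx).symm)
  have hWbot : Filter.Tendsto W Filter.atBot Filter.atBot := by
    have heq : ∀ x ∈ Iic γ₀, W x = w γ₀ * (x - γ₀) := by
      intro x hx
      have : ∫ s in γ₀..x, wt s = ∫ s in γ₀..x, w γ₀ := by
        apply intervalIntegral.integral_congr
        intro s hs
        rw [uIcc_of_ge hx] at hs
        have : c s = γ₀ := by
          simp [hcdef, max_eq_left (min_le_of_right_le hs.2)]
        simp [hwtdef, this]
      simp only [hWdef]
      rw [this, intervalIntegral.integral_const, smul_eq_mul]; ring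
    have hlin : Filter.Tendsto (fun x => w γ₀ * (x - γ₀)) Filter.atBot Filter.atBot := by
      apply Filter.Tendsto.const_mul_atBot (hw_pos γ₀ ⟨le_rfl, hγ.le⟩)
      exact Filter.tendsto_atBot_add_const_right _ _ Filter.tendsto_id
    exact hlin.congr' (by
      filter_upwards [Filter.eventually_le_atBot γ₀] with x hx
      exact (heq x hx).symm)
  have hWsurj : Function.Surjective W := hWcont.surjective hWtop hWbot
  -- inverse of W
  set e := StrictMono.orderIsoOfSurjective W hWmono hWsurj with hedef
  set V : ℝ → ℝ := fun y => e.symm y with hVdef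
  have hWV : ∀ y, W (V y) = y := fun y =>
    StrictMono.orderIsoOfSurjective_self_symm_apply W hWmono hWsurj y
  have hVW : ∀ x, V (W x) = x := fun x =>
    StrictMono.orderIsoOfSurjective_symm_apply_self W hWmono hWsurj x
  have hVcont : Continuous V := e.symm.continuous
  have hVmono : StrictMono V := e.symm.strictMono
  -- the optimal schedule
  set γs : ℝ → ℝ := fun t => V (2 * κ * t) with hγsdef
  have hγs0 : γs 0 = γ₀ := by
    simp only [hγsdef, mul_zero]
    rw [← hW0, hVW]
  have hγs1 : γs 1 = γ₁ := by
    simp only [hγsdef, mul_one]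
    rw [← hW1, hVW]
  have hγscont : Continuous γs := hVcont.comp (continuous_const.mul continuous_id)
  have hγsmono : StrictMono γs := fun a b h =>
    hVmono (by nlinarith)
  -- derivative of γs
  have hV' : ∀ y, HasDerivAt V (wt (V y))⁻¹ y := fun y =>
    HasDerivAt.of_local_left_inverse hVcont.continuousAt (hW (V y)) (hwt_pos _).ne'
      (Filter.Eventually.of_forall hWV)
  set D : ℝ → ℝ := fun t => 2 * κ * (wt (γs t))⁻¹ with hDdef
  have hγsderiv : ∀ t, HasDerivAt γs (D t) t := by
    intro t
    have hin : HasDerivAt (fun t : ℝ => 2 * κ * t) (2 * κ) t := by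
      simpa using (hasDerivAt_id t).const_mul (2 * κ)
    have h2 : HasDerivAt γs ((wt (γs t))⁻¹ * (2 * κ)) t := (hV' (2 * κ * t)).comp t hin
    convert h2 using 1
    simp only [hDdef]
    ring
  have hDγ : deriv γs = D := funext fun t => (hγsderiv t).deriv
  have hDcont : Continuous D := by
    apply continuous_const.mul
    exact (hwt_cont.comp hγscont).inv₀ fun t => (hwt_pos _).ne'
  have hγsCD : ContDiff ℝ 1 γs := by
    rw [contDiff_one_iff_deriv]
    exact ⟨fun t => (hγsderiv t).differentiableAt, by rw [hDγ]; exact hDcont⟩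
  have hmaps : MapsTo γs (Icc (0:ℝ) 1) (Icc γ₀ γ₁) := by
    intro t ht
    constructor
    · rw [← hγs0]; exact hγsmono.monotone ht.1
    · rw [← hγs1]; exact hγsmono.monotone ht.2
  have hdW : ∀ t ∈ Icc (0:ℝ) 1, derivWithin γs (Icc (0:ℝ) 1) t = D t := fun t ht =>
    (hγsderiv t).hasDerivWithinAt.derivWithin (uniqueDiffOn_Icc one_pos t ht)
  have hloss : ∀ t ∈ Icc (0:ℝ) 1,
      (1 / 2) * derivWithin γs (Icc (0:ℝ) 1) t * w (γs t) = κ := by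
    intro t ht
    rw [hdW t ht]
    have hmem := hmaps ht
    have hne : w (γs t) ≠ 0 := (hw_pos _ hmem).ne'
    have hDt : D t = 2 * κ * (wt (γs t))⁻¹ := rfl
    rw [hDt, hwt_eq _ hmem]
    field_simp
  have hsched : IsSched γs := by
    rw [hIsSched]
    exact ⟨hγsCD.contDiffOn, hγsmono.strictMonoOn _, hmaps, hγs0, hγs1, hloss⟩
  refine ⟨⟨γs, hsched, hloss, hκpos.le, ?_⟩, ?_⟩
  · -- zero variance
    have heq0 : EqOn (fun t => ((1 / 2) * derivWithin γs (Icc (0:ℝ) 1) t * w (γs t) - κ) ^ 2)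
        (fun _ => (0:ℝ)) (uIcc (0:ℝ) 1) := by
      intro t ht
      rw [uIcc_of_le zero_le_one] at ht
      show ((1 / 2) * derivWithin γs (Icc (0:ℝ) 1) t * w (γs t) - κ) ^ 2 = 0
      rw [hloss t ht]
      simp
    rw [intervalIntegral.integral_congr heq0]
    simp
  · -- uniqueness
    have key : ∀ g, IsSched g → ∀ t ∈ Icc (0:ℝ) 1, W (g t) = 2 * κ * t := by
      intro g hg
      rw [hIsSched] at hg
      obtain ⟨hcd, _hmono, hgmaps, hg0, _hg1, hgloss⟩ := hg
      have hψ : ∀ x ∈ Ico (0:ℝ) 1,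
          HasDerivWithinAt (fun t => W (g t)) ((fun _ : ℝ => 2 * κ) x) (Ici x) x := by
        intro x hx
        have hx' : x ∈ Icc (0:ℝ) 1 := Ico_subset_Icc_self hx
        have hgd : HasDerivWithinAt g (derivWithin g (Icc (0:ℝ) 1) x) (Icc (0:ℝ) 1) x :=
          ((hcd.differentiableOn one_ne_zero) x hx').hasDerivWithinAt
        have hcomp := (hW (g x)).comp_hasDerivWithinAt x hgd
        have heq : wt (g x) * derivWithin g (Icc (0:ℝ) 1) x = 2 * κ := by
          have h1 := hgloss x hx'
          rw [hwt_eq _ (hgmaps hx')]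
          linarith [h1, mul_comm (derivWithin g (Icc (0:ℝ) 1) x) (w (g x))]
        rw [heq] at hcomp
        exact (hcomp.mono (Icc_subset_Icc hx'.1 le_rfl)).mono_of_mem_nhdsWithin
          (Icc_mem_nhdsGE_of_mem ⟨le_rfl, hx.2⟩)
      have hφ : ∀ x ∈ Ico (0:ℝ) 1,
          HasDerivWithinAt (fun t : ℝ => 2 * κ * t) ((fun _ : ℝ => 2 * κ) x) (Ici x) x := by
        intro x _
        exact (by simpa using (hasDerivAt_id x).const_mul (2 * κ) :
          HasDerivAt (fun t : ℝ => 2 * κ * t) (2 * κ) x).hasDerivWithinAt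
      have := eq_of_has_deriv_right_eq hψ hφ
        (hWcont.comp_continuousOn (hcd.continuousOn)) (by fun_prop)
        (by simp [hg0, hW0])
      intro t ht
      exact this t ht
    intro g₁ g₂ h1 h2 t ht
    have e1 := key g₁ h1 t ht
    have e2 := key g₂ h2 t ht
    exact hWmono.injective (e1.trans e2.symm)
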